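/- arXiv:1711.07585 — 4 statements merged into one kernel-verified Lean document; each statement's English description precedes it below -/
import Mathlib

section
/- Let {E_k : k = 1,...,n} be positive semidefinite operators on ℂ^d, each of rank at most one, such that the map sending each pure state ρ to its outcome probability vector (tr(ρ E_1),...,tr(ρ E_n)) is injective on the set of pure states. Suppose moreover there is a subset B ⊆ {1,...,n} with ∑_{k∈B} E_k = I. Let G = ∑_{k=1}^n E_k (which is positive definite) and set F_k = G^{-1/2} E_k G^{-1/2}. Then {F_k : k = 1,...,n} is a POVM whose elements each have rank at most one, and the map sending each pure state ρ to (tr(ρ F_1),...,tr(ρ F_n)) is injective on the set of pure states (i.e., {F_k} is a rank-1 PSIR-complete POVM). -/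
open Matrix BigOperators ComplexOrder

/-- The pure state (rank-one projection) `|φ⟩⟨φ|` associated to a vector `φ`,
as a matrix with entries `φ i * conj (φ j)`. -/
noncomputable def pureState {d : ℕ} (φ : Fin d → ℂ) : Matrix (Fin d) (Fin d) ℂ :=
  Matrix.vecMulVec φ (star φ)

/-- `φ` is a unit vector. -/
def IsUnitVec {d : ℕ} (φ : Fin d → ℂ) : Prop := star φ ⬝ᵥ φ = 1

/-- The positive semidefinite square root of a positive semidefinite matrix
(the definition `Matrix.PosSemidef.sqrt` of the older Mathlib, since removed). -/
noncomputable def Matrix.PosSemidef.sqrt {n 𝕜 : Type*} [Fintype n] [DecidableEq n] [RCLike 𝕜]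
    {A : Matrix n n 𝕜} (hA : A.PosSemidef) : Matrix n n 𝕜 :=
  hA.1.eigenvectorUnitary.1 * diagonal ((↑) ∘ (√·) ∘ hA.1.eigenvalues) *
  (star hA.1.eigenvectorUnitary : Matrix n n 𝕜)

lemma Matrix.PosSemidef.posSemidef_sqrt {n 𝕜 : Type*} [Fintype n] [DecidableEq n] [RCLike 𝕜]
    {A : Matrix n n 𝕜} (hA : A.PosSemidef) : hA.sqrt.PosSemidef := by
  unfold Matrix.PosSemidef.sqrt
  have hD : (diagonal ((↑) ∘ (√·) ∘ hA.1.eigenvalues : n → 𝕜)).PosSemidef :=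
    Matrix.PosSemidef.diagonal (fun i => by
      simp only [Pi.zero_apply, Function.comp_apply]
      exact_mod_cast Real.sqrt_nonneg _)
  have := hD.mul_mul_conjTranspose_same (hA.1.eigenvectorUnitary : Matrix n n 𝕜)
  simpa [Matrix.star_eq_conjTranspose] using this

lemma Matrix.PosSemidef.sqrt_mul_self {n 𝕜 : Type*} [Fintype n] [DecidableEq n] [RCLike 𝕜]
    {A : Matrix n n 𝕜} (hA : A.PosSemidef) : hA.sqrt * hA.sqrt = A := by
  unfold Matrix.PosSemidef.sqrt
  conv_rhs => rw [hA.1.spectral_theorem, Unitary.conjStarAlgAut_apply]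
  have hU : (star hA.1.eigenvectorUnitary : Matrix n n 𝕜) * hA.1.eigenvectorUnitary.1 = 1 :=
    Unitary.coe_star_mul_self _
  have hDD : diagonal ((↑) ∘ (√·) ∘ hA.1.eigenvalues : n → 𝕜) *
      diagonal ((↑) ∘ (√·) ∘ hA.1.eigenvalues : n → 𝕜) =
      diagonal (RCLike.ofReal ∘ hA.1.eigenvalues) := by
    rw [diagonal_mul_diagonal]
    congr 1
    funext i
    simp only [Function.comp_apply]
    rw [← RCLike.ofReal_mul, Real.mul_self_sqrt (hA.eigenvalues_nonneg i)]
  calc _ = hA.1.eigenvectorUnitary.1 * diagonal ((↑) ∘ (√·) ∘ hA.1.eigenvalues : n → 𝕜) *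
        ((star hA.1.eigenvectorUnitary : Matrix n n 𝕜) * hA.1.eigenvectorUnitary.1) *
        diagonal ((↑) ∘ (√·) ∘ hA.1.eigenvalues : n → 𝕜) *
        (star hA.1.eigenvectorUnitary : Matrix n n 𝕜) := by simp only [mul_assoc]
    _ = _ := by rw [hU, mul_one, mul_assoc _ (diagonal _) (diagonal _), hDD]

lemma pureState_mul_trace {d : ℕ} (φ : Fin d → ℂ) (M : Matrix (Fin d) (Fin d) ℂ) :
    (pureState φ * M).trace = star φ ⬝ᵥ (M *ᵥ φ) := by
  simp only [Matrix.trace, Matrix.diag, Matrix.mul_apply, pureState, Matrix.vecMulVec_apply,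
    dotProduct, Matrix.mulVec, Pi.star_apply, Finset.mul_sum]
  rw [Finset.sum_comm]
  exact Finset.sum_congr rfl fun j _ => Finset.sum_congr rfl fun i _ => by ring

lemma conj_mul_pureState {d : ℕ} (M : Matrix (Fin d) (Fin d) ℂ) (φ : Fin d → ℂ) :
    M * pureState φ * Mᴴ = pureState (M *ᵥ φ) := by
  ext i j
  simp only [Matrix.mul_apply, pureState, Matrix.vecMulVec_apply, Matrix.mulVec,
    Matrix.conjTranspose_apply, dotProduct, Pi.star_apply, star_sum, star_mul',
    Finset.sum_mul, Finset.mul_sum]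
  exact Finset.sum_congr rfl fun k _ => Finset.sum_congr rfl fun l _ => by ring

lemma pureState_smul {d : ℕ} (c : ℂ) (φ : Fin d → ℂ) :
    pureState (c • φ) = (c * star c) • pureState φ := by
  ext i j
  simp only [pureState, Matrix.vecMulVec_apply, Pi.star_apply, Pi.smul_apply, smul_eq_mul,
    Matrix.smul_apply, star_mul']
  ring

theorem stmt_0 {d n : ℕ} (E : Fin n → Matrix (Fin d) (Fin d) ℂ)
    (hpsd : ∀ k, (E k).PosSemidef) (hrank : ∀ k, (E k).rank ≤ 1)
    (hinj : ∀ φ ψ : Fin d → ℂ, IsUnitVec φ → IsUnitVec ψ →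
      (∀ k, (pureState φ * E k).trace = (pureState ψ * E k).trace) →
      pureState φ = pureState ψ)
    (B : Finset (Fin n)) (hB : ∑ k ∈ B, E k = 1) :
    (∑ k, E k).PosDef ∧
    ∀ hG : (∑ k, E k).PosSemidef,
      (∀ k, (hG.sqrt⁻¹ * E k * hG.sqrt⁻¹).PosSemidef) ∧
      (∀ k, (hG.sqrt⁻¹ * E k * hG.sqrt⁻¹).rank ≤ 1) ∧
      (∑ k, hG.sqrt⁻¹ * E k * hG.sqrt⁻¹ = 1) ∧
      (∀ φ ψ : Fin d → ℂ, IsUnitVec φ → IsUnitVec ψ →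
        (∀ k, (pureState φ * (hG.sqrt⁻¹ * E k * hG.sqrt⁻¹)).trace =
              (pureState ψ * (hG.sqrt⁻¹ * E k * hG.sqrt⁻¹)).trace) →
        pureState φ = pureState ψ) := by
  classical
  have hpsdsum : ∀ s : Finset (Fin n), (∑ k ∈ s, E k).PosSemidef := by
    intro s
    induction s using Finset.induction with
    | empty => simpa using Matrix.PosSemidef.zero
    | insert _ _ hx ih =>
        rw [Finset.sum_insert hx]
        exact (hpsd _).add ih
  have hGpd : (∑ k, E k).PosDef := by
    rw [← Finset.sum_add_sum_compl B E, hB]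
    exact Matrix.PosDef.add_posSemidef Matrix.PosDef.one (hpsdsum _)
  refine ⟨hGpd, fun hG => ?_⟩
  set S := hG.sqrt with hSdef
  have hSpsd : S.PosSemidef := hG.posSemidef_sqrt
  have hSS : S * S = ∑ k, E k := hG.sqrt_mul_self
  have hSpd : S.PosDef := by
    refine .of_dotProduct_mulVec_pos hSpsd.isHermitian fun x hx => ?_
    rcases (hSpsd.dotProduct_mulVec_nonneg x).lt_or_eq with h | h
    · exact h
    · exfalso
      have h0 : S *ᵥ x = 0 := (hSpsd.dotProduct_mulVec_zero_iff x).mp h.symm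
      have h1 : (∑ k, E k) *ᵥ x = 0 := by
        rw [← hSS, ← Matrix.mulVec_mulVec, h0, Matrix.mulVec_zero]
      have := hGpd.dotProduct_mulVec_pos hx
      rw [h1, dotProduct_zero] at this
      exact lt_irrefl _ this
  have hSdet : IsUnit S.det := (Matrix.isUnit_iff_isUnit_det S).mp hSpd.isUnit
  have hSinv : (S⁻¹).PosDef := hSpd.inv
  have hSinvH : (S⁻¹)ᴴ = S⁻¹ := hSinv.isHermitian
  have hmul : S * S⁻¹ = 1 := Matrix.mul_nonsing_inv S hSdet
  have hmul' : S⁻¹ * S = 1 := Matrix.nonsing_inv_mul S hSdet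
  refine ⟨?_, ?_, ?_, ?_⟩
  · intro k
    simpa [hSinvH] using (hpsd k).mul_mul_conjTranspose_same S⁻¹
  · intro k
    exact le_trans (le_trans (Matrix.rank_mul_le_left _ _) (Matrix.rank_mul_le_right _ _))
      (hrank k)
  · calc ∑ k, S⁻¹ * E k * S⁻¹ = S⁻¹ * (∑ k, E k) * S⁻¹ := by
          rw [Finset.mul_sum, Finset.sum_mul]
      _ = 1 := by
          rw [← hSS, ← mul_assoc, hmul', one_mul, hmul]
  · intro φ ψ hφ hψ h
    -- transfer traces
    have key : ∀ (M : Matrix (Fin d) (Fin d) ℂ) (v : Fin d → ℂ),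
        (pureState v * (S⁻¹ * M * S⁻¹)).trace = (pureState (S⁻¹ *ᵥ v) * M).trace := by
      intro M v
      have h1 : pureState (S⁻¹ *ᵥ v) = S⁻¹ * pureState v * S⁻¹ := by
        rw [← conj_mul_pureState S⁻¹ v, hSinvH]
      rw [h1]
      simp only [← mul_assoc]
      rw [Matrix.trace_mul_comm]
      simp only [← mul_assoc]
    set φ' := S⁻¹ *ᵥ φ with hφ'def
    set ψ' := S⁻¹ *ᵥ ψ with hψ'def
    have htr : ∀ k, (pureState φ' * E k).trace = (pureState ψ' * E k).trace := by
      intro k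
      rw [← key, ← key]
      exact h k
    -- φ, ψ nonzero, hence φ', ψ' nonzero
    have hφ0 : φ ≠ 0 := by
      intro h0
      rw [IsUnitVec, h0] at hφ
      simp at hφ
    have hψ0 : ψ ≠ 0 := by
      intro h0
      rw [IsUnitVec, h0] at hψ
      simp at hψ
    have hSφ' : S *ᵥ φ' = φ := by
      rw [hφ'def, Matrix.mulVec_mulVec, hmul, Matrix.one_mulVec]
    have hSψ' : S *ᵥ ψ' = ψ := by
      rw [hψ'def, Matrix.mulVec_mulVec, hmul, Matrix.one_mulVec]
    have hφ'0 : φ' ≠ 0 := by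
      intro h0
      apply hφ0
      rw [← hSφ', h0, Matrix.mulVec_zero]
    have hψ'0 : ψ' ≠ 0 := by
      intro h0
      apply hψ0
      rw [← hSψ', h0, Matrix.mulVec_zero]
    -- norms
    set a : ℝ := ∑ i, Complex.normSq (φ' i) with hadef
    set b : ℝ := ∑ i, Complex.normSq (ψ' i) with hbdef
    have ha : star φ' ⬝ᵥ φ' = (a : ℂ) := by
      simp only [dotProduct, Pi.star_apply, hadef]
      push_cast
      exact Finset.sum_congr rfl fun i _ => (Complex.normSq_eq_conj_mul_self (z := φ' i)).symm
    have hb : star ψ' ⬝ᵥ ψ' = (b : ℂ) := by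
      simp only [dotProduct, Pi.star_apply, hbdef]
      push_cast
      exact Finset.sum_congr rfl fun i _ => (Complex.normSq_eq_conj_mul_self (z := ψ' i)).symm
    have hapos : 0 < a := by
      obtain ⟨i, hi⟩ := Function.ne_iff.mp hφ'0
      exact Finset.sum_pos' (fun j _ => Complex.normSq_nonneg _)
        ⟨i, Finset.mem_univ i, Complex.normSq_pos.mpr hi⟩
    have hbpos : 0 < b := by
      obtain ⟨i, hi⟩ := Function.ne_iff.mp hψ'0
      exact Finset.sum_pos' (fun j _ => Complex.normSq_nonneg _)
        ⟨i, Finset.mem_univ i, Complex.normSq_pos.mpr hi⟩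
    -- a = b, by summing over B
    have hsum : ∀ v : Fin d → ℂ, ∑ k ∈ B, (pureState v * E k).trace = star v ⬝ᵥ v := by
      intro v
      rw [← Matrix.trace_sum, ← Finset.mul_sum, hB, mul_one]
      simpa using pureState_mul_trace v 1
    have hab : a = b := by
      have : (a : ℂ) = (b : ℂ) := by
        rw [← ha, ← hb, ← hsum φ', ← hsum ψ']
        exact Finset.sum_congr rfl fun k _ => htr k
      exact_mod_cast this
    -- normalized vectors
    set c : ℂ := (((Real.sqrt a)⁻¹ : ℝ) : ℂ) with hcdef
    have hcstar : star c = c := by rw [hcdef]; exact Complex.conj_ofReal _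
    have hcc : c * star c = ((a : ℂ))⁻¹ := by
      rw [hcstar, hcdef]
      push_cast
      rw [← mul_inv, ← Complex.ofReal_mul, Real.mul_self_sqrt hapos.le]
    have hane : (a : ℂ) ≠ 0 := by exact_mod_cast hapos.ne'
    have hunit : ∀ v : Fin d → ℂ, star v ⬝ᵥ v = (a : ℂ) → IsUnitVec (c • v) := by
      intro v hv
      rw [IsUnitVec, star_smul, smul_dotProduct, dotProduct_smul, hv, smul_eq_mul, smul_eq_mul,
        ← mul_assoc, mul_comm (star c) c, hcc]
      exact inv_mul_cancel₀ hane
    have hφ'' : IsUnitVec (c • φ') := hunit φ' ha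
    have hψ'' : IsUnitVec (c • ψ') := hunit ψ' (by rw [hb, hab])
    have htr'' : ∀ k, (pureState (c • φ') * E k).trace = (pureState (c • ψ') * E k).trace := by
      intro k
      rw [pureState_smul, pureState_smul, smul_mul_assoc, smul_mul_assoc, Matrix.trace_smul,
        Matrix.trace_smul, htr k]
    have heq := hinj _ _ hφ'' hψ'' htr''
    rw [pureState_smul, pureState_smul, hcc] at heq
    have heq' : pureState φ' = pureState ψ' := by
      have := congrArg (fun M => (a : ℂ) • M) heq
      simpa [smul_smul, mul_inv_cancel₀ hane] using this
    -- conjugate back by S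
    have : S * pureState φ' * Sᴴ = S * pureState ψ' * Sᴴ := by rw [heq']
    rwa [conj_mul_pureState, conj_mul_pureState, hSφ', hSψ'] at this
end

section
/- On ℂ², define the four rank-one positive operators E₁ = |0⟩⟨0|, E₂ = |1⟩⟨1|, E₃ = (1/2)(|0⟩+|1⟩)(⟨0|+⟨1|), E₄ = (1/2)(|0⟩+i|1⟩)(⟨0|−i⟨1|), let G = E₁+E₂+E₃+E₄, and set F_k = G^{-1/2} E_k G^{-1/2}. Then {F₁, F₂, F₃, F₄} is a POVM whose elements each have rank at most one, and the map sending each density matrix ρ on ℂ² to (tr(ρF₁), tr(ρF₂), tr(ρF₃), tr(ρF₄)) is injective on the set of all density matrices; that is, it is a four-element rank-1 informationally complete POVM on ℂ². -/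
open Matrix BigOperators ComplexOrder

/-- `ρ` is a density matrix: positive semidefinite with trace one. -/
def IsDensityMatrix {d : ℕ} (ρ : Matrix (Fin d) (Fin d) ℂ) : Prop :=
  ρ.PosSemidef ∧ ρ.trace = 1

/-- `E₁ = |0⟩⟨0|`, `E₂ = |1⟩⟨1|`, `E₃ = (1/2)(|0⟩+|1⟩)(⟨0|+⟨1|)`,
`E₄ = (1/2)(|0⟩+i|1⟩)(⟨0|−i⟨1|)`. -/
noncomputable def E4 : Fin 4 → Matrix (Fin 2) (Fin 2) ℂ
  | 0 => pureState ![1, 0]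
  | 1 => pureState ![0, 1]
  | 2 => (1/2 : ℂ) • pureState ![1, 1]
  | 3 => (1/2 : ℂ) • pureState ![1, Complex.I]

lemma pureState_posSemidef {d : ℕ} (φ : Fin d → ℂ) : (pureState φ).PosSemidef := by
  have h : pureState φ = (Matrix.replicateRow (Fin 1) (star φ))ᴴ * (Matrix.replicateRow (Fin 1) (star φ)) := by
    rw [Matrix.conjTranspose_replicateRow, star_star, pureState, Matrix.vecMulVec_eq (Fin 1)]
    rfl
  rw [h]
  exact Matrix.posSemidef_conjTranspose_mul_self _

lemma psd_smul {n : ℕ} {A : Matrix (Fin n) (Fin n) ℂ} (hA : A.PosSemidef) {c : ℂ}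
    (hc : 0 ≤ c) : (c • A).PosSemidef := by
  have hcs : star c = c := by
    rw [Complex.star_def, Complex.conj_eq_iff_im]
    exact (Complex.nonneg_iff.mp hc).2.symm ▸ rfl
  constructor
  · unfold Matrix.IsHermitian
    rw [Matrix.conjTranspose_smul, hA.1, hcs]
  · exact (hA.smul hc).2

lemma E4_posSemidef (k : Fin 4) : (E4 k).PosSemidef := by
  have h2 : (0:ℂ) ≤ (1/2 : ℂ) := by
    rw [Complex.nonneg_iff]; norm_num
  fin_cases k
  · exact pureState_posSemidef _
  · exact pureState_posSemidef _
  · exact psd_smul (pureState_posSemidef _) h2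
  · exact psd_smul (pureState_posSemidef _) h2

lemma rank_smul_le {n : ℕ} (c : ℂ) (A : Matrix (Fin n) (Fin n) ℂ) :
    (c • A).rank ≤ A.rank := by
  have h : c • A = A * (c • (1 : Matrix (Fin n) (Fin n) ℂ)) := by
    rw [Matrix.mul_smul, mul_one]
  rw [h]
  exact Matrix.rank_mul_le_left _ _

lemma rank_pureState_le {d : ℕ} (φ : Fin d → ℂ) : (pureState φ).rank ≤ 1 := by
  rw [pureState, Matrix.vecMulVec_eq (Fin 1)]
  calc (Matrix.replicateCol (Fin 1) φ * Matrix.replicateRow (Fin 1) (star φ)).rank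
      ≤ (Matrix.replicateCol (Fin 1) φ).rank := Matrix.rank_mul_le_left _ _
    _ ≤ Fintype.card (Fin 1) := Matrix.rank_le_card_width _
    _ = 1 := by simp

lemma rank_E4_le (k : Fin 4) : (E4 k).rank ≤ 1 := by
  fin_cases k
  · exact rank_pureState_le _
  · exact rank_pureState_le _
  · exact le_trans (rank_smul_le _ _) (rank_pureState_le _)
  · exact le_trans (rank_smul_le _ _) (rank_pureState_le _)

lemma trace_mul_E4_0 (M : Matrix (Fin 2) (Fin 2) ℂ) : (M * E4 0).trace = M 0 0 := by
  simp [E4, pureState, Matrix.trace_fin_two, Matrix.mul_apply, Fin.sum_univ_two,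
    Matrix.vecMulVec_apply, -Matrix.cons_vecMulVec]

lemma trace_mul_E4_1 (M : Matrix (Fin 2) (Fin 2) ℂ) : (M * E4 1).trace = M 1 1 := by
  simp [E4, pureState, Matrix.trace_fin_two, Matrix.mul_apply, Fin.sum_univ_two,
    Matrix.vecMulVec_apply, -Matrix.cons_vecMulVec]

lemma trace_mul_E4_2 (M : Matrix (Fin 2) (Fin 2) ℂ) :
    (M * E4 2).trace = 1/2 * (M 0 0 + M 0 1 + M 1 0 + M 1 1) := by
  simp [E4, pureState, Matrix.trace_fin_two, Matrix.mul_apply, Fin.sum_univ_two,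
    Matrix.vecMulVec_apply, -Matrix.cons_vecMulVec]; ring

lemma trace_mul_E4_3 (M : Matrix (Fin 2) (Fin 2) ℂ) :
    (M * E4 3).trace = 1/2 * (M 0 0 + Complex.I * M 0 1 - Complex.I * M 1 0 + M 1 1) := by
  simp [E4, pureState, Matrix.trace_fin_two, Matrix.mul_apply, Fin.sum_univ_two,
    Matrix.vecMulVec_apply, -Matrix.cons_vecMulVec]; ring

lemma E4_zero_add_one : E4 0 + E4 1 = 1 := by
  ext i j
  fin_cases i <;> fin_cases j <;>
    simp [E4, pureState, Matrix.vecMulVec_apply, Matrix.one_apply, -Matrix.cons_vecMulVec]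

lemma sumE4_posDef : (∑ k, E4 k).PosDef := by
  have hsum : ∑ k, E4 k = 1 + (E4 2 + E4 3) := by
    rw [Fin.sum_univ_four, E4_zero_add_one, add_assoc]
  rw [hsum]
  exact Matrix.PosDef.add_posSemidef Matrix.PosDef.one ((E4_posSemidef 2).add (E4_posSemidef 3))

theorem stmt_12 :
    (∑ k, E4 k).PosDef ∧
    ∀ hG : (∑ k, E4 k).PosSemidef,
      (∀ k, (hG.sqrt⁻¹ * E4 k * hG.sqrt⁻¹).PosSemidef) ∧
      (∀ k, (hG.sqrt⁻¹ * E4 k * hG.sqrt⁻¹).rank ≤ 1) ∧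
      (∑ k, hG.sqrt⁻¹ * E4 k * hG.sqrt⁻¹ = 1) ∧
      (∀ ρ₁ ρ₂ : Matrix (Fin 2) (Fin 2) ℂ, IsDensityMatrix ρ₁ → IsDensityMatrix ρ₂ →
        (∀ k, (ρ₁ * (hG.sqrt⁻¹ * E4 k * hG.sqrt⁻¹)).trace =
              (ρ₂ * (hG.sqrt⁻¹ * E4 k * hG.sqrt⁻¹)).trace) → ρ₁ = ρ₂) := by
  refine ⟨sumE4_posDef, fun hG => ?_⟩
  set S := hG.sqrt with hSdef
  have hSpsd := hG.posSemidef_sqrt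
  have hSS : S * S = ∑ k, E4 k := hG.sqrt_mul_self
  have hdet : IsUnit S.det := by
    have hdG : (∑ k, E4 k).det ≠ 0 := sumE4_posDef.det_pos.ne'
    have hmul : S.det * S.det = (∑ k, E4 k).det := by rw [← Matrix.det_mul, hSS]
    have hne : S.det ≠ 0 := fun h => hdG (by rw [← hmul, h, mul_zero])
    exact hne.isUnit
  have hinv1 : S⁻¹ * S = 1 := Matrix.nonsing_inv_mul S hdet
  have hinv2 : S * S⁻¹ = 1 := Matrix.mul_nonsing_inv S hdet
  have hherm : (S⁻¹)ᴴ = S⁻¹ := hSpsd.isHermitian.inv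
  have lift : ∀ ρ : Matrix (Fin 2) (Fin 2) ℂ, S * (S⁻¹ * ρ * S⁻¹) * S = ρ := by
    intro ρ
    calc S * (S⁻¹ * ρ * S⁻¹) * S = (S * S⁻¹) * ρ * (S⁻¹ * S) := by
          simp only [Matrix.mul_assoc]
      _ = ρ := by rw [hinv2, hinv1, Matrix.one_mul, Matrix.mul_one]
  have key : ∀ (ρ : Matrix (Fin 2) (Fin 2) ℂ) (k : Fin 4),
      (ρ * (S⁻¹ * E4 k * S⁻¹)).trace = ((S⁻¹ * ρ * S⁻¹) * E4 k).trace := by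
    intro ρ k
    have a1 : ρ * (S⁻¹ * E4 k * S⁻¹) = (ρ * S⁻¹) * E4 k * S⁻¹ := by
      simp only [Matrix.mul_assoc]
    have a2 : S⁻¹ * (ρ * S⁻¹) * E4 k = (S⁻¹ * ρ * S⁻¹) * E4 k := by
      simp only [Matrix.mul_assoc]
    rw [a1, Matrix.trace_mul_cycle, a2]
  refine ⟨?_, ?_, ?_, ?_⟩
  · intro k
    have h := (E4_posSemidef k).conjTranspose_mul_mul_same S⁻¹
    rwa [hherm] at h
  · intro k
    calc (S⁻¹ * E4 k * S⁻¹).rank ≤ (S⁻¹ * E4 k).rank := Matrix.rank_mul_le_left _ _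
      _ ≤ (E4 k).rank := Matrix.rank_mul_le_right _ _
      _ ≤ 1 := rank_E4_le k
  · have hs : ∑ k, S⁻¹ * E4 k * S⁻¹ = S⁻¹ * (∑ k, E4 k) * S⁻¹ := by
      rw [Finset.mul_sum, Finset.sum_mul]
    rw [hs, ← hSS]
    calc S⁻¹ * (S * S) * S⁻¹ = S⁻¹ * (S * (S * S⁻¹)) := by simp only [Matrix.mul_assoc]
      _ = 1 := by rw [hinv2, Matrix.mul_one, hinv1]
  · intro ρ₁ ρ₂ _ _ htr
    have hk : ∀ k, ((S⁻¹ * ρ₁ * S⁻¹) * E4 k).trace = ((S⁻¹ * ρ₂ * S⁻¹) * E4 k).trace := by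
      intro k
      rw [← key ρ₁ k, ← key ρ₂ k]
      exact htr k
    set M₁ := S⁻¹ * ρ₁ * S⁻¹ with hM₁
    set M₂ := S⁻¹ * ρ₂ * S⁻¹ with hM₂
    have h0 : M₁ 0 0 = M₂ 0 0 := by
      have := hk 0; rwa [trace_mul_E4_0, trace_mul_E4_0] at this
    have h1 : M₁ 1 1 = M₂ 1 1 := by
      have := hk 1; rwa [trace_mul_E4_1, trace_mul_E4_1] at this
    have h2 := hk 2
    rw [trace_mul_E4_2, trace_mul_E4_2] at h2
    have h3 := hk 3
    rw [trace_mul_E4_3, trace_mul_E4_3] at h3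
    have hI : Complex.I ^ 2 = -1 := Complex.I_sq
    have h01 : M₁ 0 1 = M₂ 0 1 := by
      linear_combination h2 - Complex.I * h3 + (Complex.I/2 - 1/2) * h0 +
        (Complex.I/2 - 1/2) * h1 +
        ((M₁ 0 1 - M₂ 0 1 - (M₁ 1 0 - M₂ 1 0))/2) * hI
    have h10 : M₁ 1 0 = M₂ 1 0 := by
      linear_combination h2 + Complex.I * h3 + (-Complex.I/2 - 1/2) * h0 +
        (-Complex.I/2 - 1/2) * h1 +
        ((M₁ 1 0 - M₂ 1 0 - (M₁ 0 1 - M₂ 0 1))/2) * hI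
    have hM : M₁ = M₂ := by
      ext i j
      fin_cases i <;> fin_cases j
      · exact h0
      · exact h01
      · exact h10
      · exact h1
    calc ρ₁ = S * M₁ * S := (lift ρ₁).symm
      _ = S * M₂ * S := by rw [hM]
      _ = ρ₂ := lift ρ₂
end

section
/- Let d ≥ 1, fix an index j ∈ {0,...,d−1}, and let φ, ψ ∈ ℂ^d be unit vectors with φ(j) ≠ 0. Suppose that (i) |φ(s)| = |ψ(s)| for every s ∈ {0,...,d−1}, (ii) |φ(j) + φ(s)|² = |ψ(j) + ψ(s)|² for every s ≠ j, and (iii) |φ(j) − i·φ(s)|² = |ψ(j) − i·ψ(s)|² for every s ≠ j. Then there exists a complex number c with |c| = 1 such that ψ = c·φ; equivalently, |φ⟩⟨φ| = |ψ⟩⟨ψ|. (Conditions (i)–(iii) say that φ and ψ give the same outcome probabilities for the d + 2(d−1) = 3d−2 rank-one operators E_s = |s⟩⟨s|, F_s = (|j⟩+|s⟩)(⟨j|+⟨s|), and G_s = (|j⟩+i|s⟩)(⟨j|−i⟨s|).) -/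
open Matrix BigOperators ComplexOrder

theorem stmt_13 {d : ℕ} (j : Fin d) (φ ψ : Fin d → ℂ)
    (hφ : IsUnitVec φ) (hψ : IsUnitVec ψ) (hj : φ j ≠ 0)
    (h1 : ∀ s : Fin d, ‖φ s‖ = ‖ψ s‖)
    (h2 : ∀ s : Fin d, s ≠ j →
      (‖φ j + φ s‖) ^ 2 = (‖ψ j + ψ s‖) ^ 2)
    (h3 : ∀ s : Fin d, s ≠ j →
      (‖φ j - Complex.I * φ s‖) ^ 2 = (‖ψ j - Complex.I * ψ s‖) ^ 2) :
    ∃ c : ℂ, ‖c‖ = 1 ∧ ψ = c • φ := by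
  have hjψ : ψ j ≠ 0 := by
    intro h
    rw [← norm_ne_zero_iff] at hj
    rw [h1 j, h, norm_zero] at hj
    exact hj rfl
  have key : ∀ s, (starRingEnd ℂ) (φ j) * φ s = (starRingEnd ℂ) (ψ j) * ψ s := by
    intro s
    by_cases hs : s = j
    · subst hs
      have : Complex.normSq (φ s) = Complex.normSq (ψ s) := by
        rw [← Complex.sq_norm, ← Complex.sq_norm, h1 s]
      rw [mul_comm, mul_comm ((starRingEnd ℂ) (ψ s)), Complex.mul_conj,
        Complex.mul_conj, this]
    · have e1 : Complex.normSq (φ j) = Complex.normSq (ψ j) := by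
        rw [← Complex.sq_norm, ← Complex.sq_norm, h1 j]
      have e2 : Complex.normSq (φ s) = Complex.normSq (ψ s) := by
        rw [← Complex.sq_norm, ← Complex.sq_norm, h1 s]
      have e3 : Complex.normSq (φ j + φ s) = Complex.normSq (ψ j + ψ s) := by
        rw [← Complex.sq_norm, ← Complex.sq_norm]; exact h2 s hs
      have e4 : Complex.normSq (φ j - Complex.I * φ s)
          = Complex.normSq (ψ j - Complex.I * ψ s) := by
        rw [← Complex.sq_norm, ← Complex.sq_norm]; exact h3 s hs
      simp only [Complex.normSq_apply, Complex.add_re, Complex.add_im,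
        Complex.sub_re, Complex.sub_im, Complex.mul_re, Complex.mul_im,
        Complex.I_re, Complex.I_im] at e1 e2 e3 e4
      apply Complex.ext <;>
        simp only [Complex.mul_re, Complex.mul_im, Complex.conj_re, Complex.conj_im] <;>
        nlinarith [e1, e2, e3, e4]
  refine ⟨(starRingEnd ℂ) (φ j) / (starRingEnd ℂ) (ψ j), ?_, ?_⟩
  · rw [norm_div, Complex.norm_conj, Complex.norm_conj, h1 j, div_self]
    simpa [norm_ne_zero_iff] using hjψ
  · funext s
    have hc : (starRingEnd ℂ) (ψ j) ≠ 0 := by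
      simpa using hjψ
    have := key s
    show ψ s = (starRingEnd ℂ) (φ j) / (starRingEnd ℂ) (ψ j) * φ s
    rw [div_mul_eq_mul_div, eq_div_iff hc]
    linear_combination -this
end

section
/- Suppose there exist three orthonormal bases of ℂ⁴ that together distinguish all pure states, i.e., the map sending each pure state ρ to the twelve probabilities (⟨φ, ρφ⟩) over all twelve basis vectors φ is injective on pure states. Then there exists a POVM on ℂ⁴ with exactly 10 elements, each of rank at most one, such that the map sending each pure state to its outcome probability vector under this POVM is injective on pure states (a 10-element rank-1 PSIR-complete POVM on ℂ⁴). -/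
open Matrix BigOperators ComplexOrder

namespace Stmt14Aux

lemma dot_pureState {d : ℕ} (χ u : Fin d → ℂ) :
    star u ⬝ᵥ (pureState χ) *ᵥ u = (star u ⬝ᵥ χ) * (star χ ⬝ᵥ u) := by
  simp only [pureState, dotProduct, mulVec, vecMulVec_apply, Pi.star_apply,
    Finset.mul_sum, Finset.sum_mul]
  rw [Finset.sum_comm]
  refine Finset.sum_congr rfl fun p _ => Finset.sum_congr rfl fun q _ => ?_
  ring

lemma trace_pureState_mul {d : ℕ} (ψ : Fin d → ℂ) (M : Matrix (Fin d) (Fin d) ℂ) :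
    (pureState ψ * M).trace = star ψ ⬝ᵥ M *ᵥ ψ := by
  simp only [Matrix.trace, Matrix.diag, Matrix.mul_apply, pureState, vecMulVec_apply,
    Pi.star_apply, dotProduct, mulVec, Finset.mul_sum]
  rw [Finset.sum_comm]
  refine Finset.sum_congr rfl fun p _ => Finset.sum_congr rfl fun q _ => ?_
  ring

lemma pureState_posSemidef {d : ℕ} (v : Fin d → ℂ) : (pureState v).PosSemidef := by
  refine Matrix.PosSemidef.of_dotProduct_mulVec_nonneg ?_ ?_
  · ext p q
    simp [pureState, conjTranspose_apply, vecMulVec_apply, mul_comm]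
  · intro x
    rw [dot_pureState]
    rw [star_dotProduct x v]
    exact star_mul_self_nonneg _

lemma rank_pureState_le_one {d : ℕ} (v : Fin d → ℂ) : (pureState v).rank ≤ 1 := by
  rw [pureState, vecMulVec_eq (Fin 1)]
  exact (Matrix.rank_mul_le_left _ _).trans
    ((Matrix.rank_le_card_width _).trans (by simp))

lemma mul_pureState_mul {d : ℕ} {B : Matrix (Fin d) (Fin d) ℂ} (hB : B.IsHermitian)
    (v : Fin d → ℂ) : B * pureState v * B = pureState (B *ᵥ v) := by
  have hB' : ∀ p q, (starRingEnd ℂ) (B p q) = B q p := fun p q => by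
    conv_rhs => rw [← hB]
    rfl
  ext p q
  simp only [Matrix.mul_apply, pureState, vecMulVec_apply, Pi.star_apply, mulVec, dotProduct,
    star_sum, star_mul', Finset.sum_mul, Finset.mul_sum, RCLike.star_def]
  refine Finset.sum_congr rfl fun i _ => Finset.sum_congr rfl fun j _ => ?_
  rw [hB' q i]
  ring

lemma herm_dot_swap {d : ℕ} {B : Matrix (Fin d) (Fin d) ℂ} (hB : B.IsHermitian)
    (x y : Fin d → ℂ) : star (B *ᵥ x) ⬝ᵥ y = star x ⬝ᵥ (B *ᵥ y) := by
  rw [star_mulVec, hB.eq, dotProduct_mulVec]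

lemma smul_pureState (c : ℂ) {d : ℕ} (v : Fin d → ℂ) :
    pureState (c • v) = (c * (starRingEnd ℂ) c) • pureState v := by
  ext p q
  simp [pureState, vecMulVec_apply]
  ring

lemma sum_proj_eq_one (v : Fin 4 → Fin 4 → ℂ)
    (h : ∀ k l, star (v k) ⬝ᵥ v l = if k = l then 1 else 0) :
    ∑ k, pureState (v k) = 1 := by
  let A : Matrix (Fin 4) (Fin 4) ℂ := Matrix.of fun i k => v k i
  have h1 : Aᴴ * A = 1 := by
    ext k l
    have := h k l
    simpa [Matrix.mul_apply, conjTranspose_apply, A, dotProduct, Matrix.one_apply] using this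
  have h2 : A * Aᴴ = 1 := mul_eq_one_comm.mp h1
  ext p q
  have := congrFun (congrFun h2 p) q
  simp only [Matrix.mul_apply, conjTranspose_apply, A, Matrix.of_apply] at this
  simpa [Matrix.sum_apply, pureState, vecMulVec_apply] using this

lemma dot_sum_mulVec {d m : ℕ} (f : Fin m → Matrix (Fin d) (Fin d) ℂ) (x χ : Fin d → ℂ) :
    ∑ k, x ⬝ᵥ (f k) *ᵥ χ = x ⬝ᵥ (∑ k, f k) *ᵥ χ := by
  simp only [dotProduct, mulVec, Matrix.sum_apply, Finset.sum_mul, Finset.mul_sum]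
  rw [Finset.sum_comm]
  refine Finset.sum_congr rfl fun p _ => ?_
  rw [Finset.sum_comm]

end Stmt14Aux

theorem stmt_14 (φ : Fin 3 → Fin 4 → Fin 4 → ℂ)
    (horth : ∀ j k l, star (φ j k) ⬝ᵥ φ j l = if k = l then 1 else 0)
    (hdist : ∀ ψ₁ ψ₂ : Fin 4 → ℂ, IsUnitVec ψ₁ → IsUnitVec ψ₂ →
      (∀ j k, star (φ j k) ⬝ᵥ (pureState ψ₁).mulVec (φ j k) =
              star (φ j k) ⬝ᵥ (pureState ψ₂).mulVec (φ j k)) →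
      pureState ψ₁ = pureState ψ₂) :
    ∃ F : Fin 10 → Matrix (Fin 4) (Fin 4) ℂ,
      (∀ k, (F k).PosSemidef) ∧ (∀ k, (F k).rank ≤ 1) ∧ (∑ k, F k = 1) ∧
      (∀ ψ₁ ψ₂ : Fin 4 → ℂ, IsUnitVec ψ₁ → IsUnitVec ψ₂ →
        (∀ k, (pureState ψ₁ * F k).trace = (pureState ψ₂ * F k).trace) →
        pureState ψ₁ = pureState ψ₂) := by
  classical
  open Stmt14Aux in
  have hcomp : ∀ j, ∑ k, pureState (φ j k) = 1 :=
    fun j => Stmt14Aux.sum_proj_eq_one (φ j) (horth j)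
  set vs : Fin 10 → Fin 4 → ℂ :=
    ![φ 0 0, φ 0 1, φ 0 2, φ 0 3, φ 1 0, φ 1 1, φ 1 2, φ 2 0, φ 2 1, φ 2 2] with hvs
  set T : Matrix (Fin 4) (Fin 4) ℂ := ∑ i, pureState (vs i) with hT
  have hv0 : vs 0 = φ 0 0 := rfl
  have hv1 : vs 1 = φ 0 1 := rfl
  have hv2 : vs 2 = φ 0 2 := rfl
  have hv3 : vs 3 = φ 0 3 := rfl
  have hv4 : vs 4 = φ 1 0 := rfl
  have hv5 : vs 5 = φ 1 1 := rfl
  have hv6 : vs 6 = φ 1 2 := rfl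
  have hv7 : vs 7 = φ 2 0 := rfl
  have hv8 : vs 8 = φ 2 1 := rfl
  have hv9 : vs 9 = φ 2 2 := rfl
  have hTsum : T = 1 + (pureState (φ 1 0) + pureState (φ 1 1) + pureState (φ 1 2)
      + pureState (φ 2 0) + pureState (φ 2 1) + pureState (φ 2 2)) := by
    have h0 := hcomp 0
    rw [Fin.sum_univ_four] at h0
    rw [hT]
    simp only [hvs, Fin.sum_univ_succ, Fin.sum_univ_zero, Matrix.cons_val_zero,
      Matrix.cons_val_succ]
    rw [← h0]
    abel
  have hTpd : T.PosDef := by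
    rw [hTsum]
    exact Matrix.PosDef.one.add_posSemidef
      ((((((Stmt14Aux.pureState_posSemidef _).add (Stmt14Aux.pureState_posSemidef _)).add
        (Stmt14Aux.pureState_posSemidef _)).add (Stmt14Aux.pureState_posSemidef _)).add
        (Stmt14Aux.pureState_posSemidef _)).add (Stmt14Aux.pureState_posSemidef _))
  open scoped MatrixOrder in
  set R : Matrix (Fin 4) (Fin 4) ℂ := CFC.sqrt T with hRdef
  open scoped MatrixOrder in
  have hRR : R * R = T := CFC.sqrt_mul_sqrt_self T (Matrix.nonneg_iff_posSemidef.mpr hTpd.posSemidef)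
  open scoped MatrixOrder in
  have hRH : R.IsHermitian := (Matrix.nonneg_iff_posSemidef.mp (CFC.sqrt_nonneg T)).isHermitian
  have hdetR : IsUnit R.det := by
    have hd : R.det * R.det = T.det := by rw [← Matrix.det_mul, hRR]
    have hTd : T.det ≠ 0 := ne_of_gt hTpd.det_pos
    refine isUnit_iff_ne_zero.mpr fun h => hTd ?_
    rw [← hd, h, mul_zero]
  set B : Matrix (Fin 4) (Fin 4) ℂ := R⁻¹ with hBdef
  have hBH : B.IsHermitian := hRH.inv
  have hBR : B * R = 1 := R.nonsing_inv_mul hdetR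
  have hRB : R * B = 1 := R.mul_nonsing_inv hdetR
  have cancel : ∀ X Y : Matrix (Fin 4) (Fin 4) ℂ, B * X * B = B * Y * B → X = Y := by
    intro X Y hxy
    have h2 := congrArg (fun Z => R * Z * R) hxy
    simp only [← Matrix.mul_assoc] at h2
    rw [hRB, Matrix.one_mul, Matrix.one_mul, Matrix.mul_assoc X B R, Matrix.mul_assoc Y B R,
      hBR, Matrix.mul_one, Matrix.mul_one] at h2
    exact h2
  refine ⟨fun i => pureState (B *ᵥ vs i), fun i => Stmt14Aux.pureState_posSemidef _,
    fun i => Stmt14Aux.rank_pureState_le_one _, ?_, ?_⟩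
  · calc ∑ i, pureState (B *ᵥ vs i) = ∑ i, B * pureState (vs i) * B :=
          Finset.sum_congr rfl fun i _ => (Stmt14Aux.mul_pureState_mul hBH _).symm
      _ = B * T * B := by rw [hT, ← Finset.sum_mul, ← Finset.mul_sum]
      _ = 1 := by
          rw [← hRR, show B * (R * R) * B = (B * R) * (R * B) by
            simp only [Matrix.mul_assoc], hBR, hRB, Matrix.one_mul]
  · intro ψ₁ ψ₂ h1 h2 h
    set w₁ : Fin 4 → ℂ := B *ᵥ ψ₁ with hw₁
    set w₂ : Fin 4 → ℂ := B *ᵥ ψ₂ with hw₂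
    have key : ∀ i, (star w₁ ⬝ᵥ vs i) * (star (vs i) ⬝ᵥ w₁)
        = (star w₂ ⬝ᵥ vs i) * (star (vs i) ⬝ᵥ w₂) := by
      intro i
      have hi := h i
      rw [Stmt14Aux.trace_pureState_mul, Stmt14Aux.trace_pureState_mul,
        Stmt14Aux.dot_pureState, Stmt14Aux.dot_pureState,
        ← Stmt14Aux.herm_dot_swap hBH ψ₁ (vs i), Stmt14Aux.herm_dot_swap hBH (vs i) ψ₁,
        ← Stmt14Aux.herm_dot_swap hBH ψ₂ (vs i), Stmt14Aux.herm_dot_swap hBH (vs i) ψ₂] at hi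
      exact hi
    have hsumdot : ∀ (j : Fin 3) (χ : Fin 4 → ℂ),
        ∑ k, (star χ ⬝ᵥ φ j k) * (star (φ j k) ⬝ᵥ χ) = star χ ⬝ᵥ χ := by
      intro j χ
      have e : ∀ k : Fin 4, (star χ ⬝ᵥ φ j k) * (star (φ j k) ⬝ᵥ χ)
          = star χ ⬝ᵥ (pureState (φ j k)) *ᵥ χ := fun k => (Stmt14Aux.dot_pureState _ _).symm
      rw [Finset.sum_congr rfl fun k _ => e k, Stmt14Aux.dot_sum_mulVec, hcomp j,
        Matrix.one_mulVec]
    have ht : star w₁ ⬝ᵥ w₁ = star w₂ ⬝ᵥ w₂ := by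
      rw [← hsumdot 0 w₁, ← hsumdot 0 w₂, Fin.sum_univ_four, Fin.sum_univ_four]
      have k0 := key 0; have k1 := key 1; have k2 := key 2; have k3 := key 3
      rw [hv0] at k0; rw [hv1] at k1; rw [hv2] at k2; rw [hv3] at k3
      linear_combination k0 + k1 + k2 + k3
    have hw1ne : w₁ ≠ 0 := by
      intro h0
      have : ψ₁ = R *ᵥ w₁ := by
        rw [hw₁, Matrix.mulVec_mulVec, hRB, Matrix.one_mulVec]
      rw [h0, Matrix.mulVec_zero] at this
      rw [this] at h1
      simp [IsUnitVec] at h1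
    set r : ℝ := ∑ p, Complex.normSq (w₁ p) with hr
    have hrc : star w₁ ⬝ᵥ w₁ = (r : ℂ) := by
      rw [hr]
      push_cast
      simp only [dotProduct, Pi.star_apply, Complex.normSq_eq_conj_mul_self, RCLike.star_def]
    have hrpos : 0 < r := by
      obtain ⟨p, hp⟩ := Function.ne_iff.mp hw1ne
      exact Finset.sum_pos' (fun i _ => Complex.normSq_nonneg _)
        ⟨p, Finset.mem_univ p, Complex.normSq_pos.mpr hp⟩
    set c : ℂ := ((Real.sqrt r : ℝ) : ℂ)⁻¹ with hc
    have hcc : c * (starRingEnd ℂ) c = (r : ℂ)⁻¹ := by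
      rw [hc, ← Complex.ofReal_inv, Complex.conj_ofReal, ← Complex.ofReal_mul, ← mul_inv,
        Real.mul_self_sqrt hrpos.le, Complex.ofReal_inv]
    have hrne : (r : ℂ) ≠ 0 := by exact_mod_cast hrpos.ne'
    have hccr : c * (starRingEnd ℂ) c * (r : ℂ) = 1 := by
      rw [hcc]; exact inv_mul_cancel₀ hrne
    set χ₁ : Fin 4 → ℂ := c • w₁ with hχ₁
    set χ₂ : Fin 4 → ℂ := c • w₂ with hχ₂
    have hdot : ∀ (u w : Fin 4 → ℂ), star u ⬝ᵥ (c • w) = c * (star u ⬝ᵥ w) :=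
      fun u w => dotProduct_smul c (star u) w
    have hdot' : ∀ (u w : Fin 4 → ℂ), star (c • w) ⬝ᵥ u = (starRingEnd ℂ) c * (star w ⬝ᵥ u) := by
      intro u w
      rw [star_smul, smul_dotProduct]
      rfl
    have hu1 : IsUnitVec χ₁ := by
      show star χ₁ ⬝ᵥ χ₁ = 1
      rw [hχ₁, hdot, hdot', hrc]
      linear_combination hccr
    have hu2 : IsUnitVec χ₂ := by
      show star χ₂ ⬝ᵥ χ₂ = 1
      rw [hχ₂, hdot, hdot', ← ht, hrc]
      linear_combination hccr
    have main : ∀ i : Fin 10, star (vs i) ⬝ᵥ (pureState χ₁) *ᵥ (vs i)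
        = star (vs i) ⬝ᵥ (pureState χ₂) *ᵥ (vs i) := by
      intro i
      rw [Stmt14Aux.dot_pureState, Stmt14Aux.dot_pureState, hχ₁, hχ₂,
        hdot, hdot, hdot', hdot']
      linear_combination (c * (starRingEnd ℂ) c) * key i
    have hprob : ∀ j k, star (φ j k) ⬝ᵥ (pureState χ₁) *ᵥ (φ j k)
        = star (φ j k) ⬝ᵥ (pureState χ₂) *ᵥ (φ j k) := by
      have u1 : star χ₁ ⬝ᵥ χ₁ = 1 := hu1
      have u2 : star χ₂ ⬝ᵥ χ₂ = 1 := hu2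
      have e1 : ∀ χ, star χ ⬝ᵥ χ = 1 →
          (star χ ⬝ᵥ φ 1 3) * (star (φ 1 3) ⬝ᵥ χ) =
            1 - (star χ ⬝ᵥ φ 1 0) * (star (φ 1 0) ⬝ᵥ χ)
              - (star χ ⬝ᵥ φ 1 1) * (star (φ 1 1) ⬝ᵥ χ)
              - (star χ ⬝ᵥ φ 1 2) * (star (φ 1 2) ⬝ᵥ χ) := by
        intro χ hχ
        have := hsumdot 1 χ
        rw [Fin.sum_univ_four, hχ] at this
        linear_combination this
      have e2 : ∀ χ, star χ ⬝ᵥ χ = 1 →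
          (star χ ⬝ᵥ φ 2 3) * (star (φ 2 3) ⬝ᵥ χ) =
            1 - (star χ ⬝ᵥ φ 2 0) * (star (φ 2 0) ⬝ᵥ χ)
              - (star χ ⬝ᵥ φ 2 1) * (star (φ 2 1) ⬝ᵥ χ)
              - (star χ ⬝ᵥ φ 2 2) * (star (φ 2 2) ⬝ᵥ χ) := by
        intro χ hχ
        have := hsumdot 2 χ
        rw [Fin.sum_univ_four, hχ] at this
        linear_combination this
      have conv : ∀ i : Fin 10, (star χ₁ ⬝ᵥ vs i) * (star (vs i) ⬝ᵥ χ₁)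
          = (star χ₂ ⬝ᵥ vs i) * (star (vs i) ⬝ᵥ χ₂) := by
        intro i
        have := main i
        rw [Stmt14Aux.dot_pureState, Stmt14Aux.dot_pureState] at this
        linear_combination this
      intro j k
      fin_cases j <;> fin_cases k
      · exact main 0
      · exact main 1
      · exact main 2
      · exact main 3
      · exact main 4
      · exact main 5
      · exact main 6
      · -- (1,3)
        show star (φ 1 3) ⬝ᵥ (pureState χ₁) *ᵥ (φ 1 3)
          = star (φ 1 3) ⬝ᵥ (pureState χ₂) *ᵥ (φ 1 3)
        rw [Stmt14Aux.dot_pureState, Stmt14Aux.dot_pureState]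
        have c4 := conv 4; rw [hv4] at c4
        have c5 := conv 5; rw [hv5] at c5
        have c6 := conv 6; rw [hv6] at c6
        linear_combination e1 χ₁ u1 - e1 χ₂ u2 - c4 - c5 - c6
      · exact main 7
      · exact main 8
      · exact main 9
      · -- (2,3)
        show star (φ 2 3) ⬝ᵥ (pureState χ₁) *ᵥ (φ 2 3)
          = star (φ 2 3) ⬝ᵥ (pureState χ₂) *ᵥ (φ 2 3)
        rw [Stmt14Aux.dot_pureState, Stmt14Aux.dot_pureState]
        have c7 := conv 7; rw [hv7] at c7
        have c8 := conv 8; rw [hv8] at c8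
        have c9 := conv 9; rw [hv9] at c9
        linear_combination e2 χ₁ u1 - e2 χ₂ u2 - c7 - c8 - c9
    have hps : pureState χ₁ = pureState χ₂ := hdist χ₁ χ₂ hu1 hu2 hprob
    rw [hχ₁, hχ₂, Stmt14Aux.smul_pureState, Stmt14Aux.smul_pureState] at hps
    have hcne : c * (starRingEnd ℂ) c ≠ 0 := by
      rw [hcc]
      exact inv_ne_zero (by exact_mod_cast hrpos.ne')
    have hwps : pureState w₁ = pureState w₂ := by
      have := smul_right_injective (Matrix (Fin 4) (Fin 4) ℂ) hcne hps
      exact this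
    rw [hw₁, hw₂, ← Stmt14Aux.mul_pureState_mul hBH ψ₁, ← Stmt14Aux.mul_pureState_mul hBH ψ₂]
      at hwps
    exact cancel _ _ hwps
end
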